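/- Let n ≥ 1 and let D⁺(n) ≤ SO(n) be the group of all diagonal orthogonal matrices diag(ε₁, …, ε_n) with ε_i ∈ {±1} and ε₁⋯ε_n = 1 (the group of even sign changes). Then the orbit space S^{n−1}/D⁺(n), equipped with the quotient topology, is homeomorphic to S^{n−1}. -/

import Mathlib

open Metric

noncomputable section

/-- Euclidean `n`-space. -/
abbrev Euc (n : ℕ) := EuclideanSpace ℝ (Fin n)

/-- The orthogonal group `O(n)`, realized as the group of linear isometric
self-equivalences of Euclidean `n`-space. -/
abbrev Orth (n : ℕ) := Euc n ≃ₗᵢ[ℝ] Euc n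

instance {n : ℕ} : MulAction (Orth n) (Euc n) where
  smul g x := g x
  one_smul _ := rfl
  mul_smul _ _ _ := rfl

instance {n : ℕ} : MulAction (Orth n) (sphere (0 : Euc n) 1) where
  smul g x := ⟨g x, by
    have hx := x.2
    simp only [mem_sphere_iff_norm, sub_zero] at hx ⊢
    rw [g.norm_map]; exact hx⟩
  one_smul x := Subtype.ext rfl
  mul_smul _ _ _ := Subtype.ext rfl

/-- The fixed-point subspace `{v : gv = v}` of an orthogonal transformation. -/
def fixedSubspace {n : ℕ} (g : Orth n) : Submodule ℝ (Euc n) :=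
  LinearMap.ker ((g.toLinearEquiv : Euc n →ₗ[ℝ] Euc n) - LinearMap.id)

/-- A reflection: an orthogonal transformation whose fixed-point subspace has
dimension `n - 1` (codimension one). -/
def IsReflection {n : ℕ} (g : Orth n) : Prop :=
  Module.finrank ℝ (fixedSubspace g) + 1 = n

/-- A rotation: an orthogonal transformation whose fixed-point subspace has
dimension `n - 2` (codimension two). -/
def IsRotation {n : ℕ} (g : Orth n) : Prop :=
  Module.finrank ℝ (fixedSubspace g) + 2 = n

namespace Stmt17
open Finset Real
variable {n : ℕ}

/-! ### Sign-change isometries -/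

def signIso (ε : Fin n → ℝ) : Orth n :=
  LinearIsometryEquiv.piLpCongrRight 2 (fun i =>
    if ε i = 1 then LinearIsometryEquiv.refl ℝ ℝ else LinearIsometryEquiv.neg ℝ)

lemma signIso_apply (ε : Fin n → ℝ) (hε : ∀ i, ε i = 1 ∨ ε i = -1) (x : Euc n) (i : Fin n) :
    signIso ε x i = ε i * x i := by
  have h0 : signIso ε x i
      = (if ε i = 1 then LinearIsometryEquiv.refl ℝ ℝ else LinearIsometryEquiv.neg ℝ) (x i) := rfl
  rw [h0]
  rcases hε i with h | h
  · rw [if_pos h, h]; simp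
  · rw [if_neg (by rw [h]; norm_num), h]; simp

/-! ### m (the gauge of the shifted simplex) -/

open scoped Classical

def uNE (hn : 1 ≤ n) : (Finset.univ : Finset (Fin n)).Nonempty :=
  ⟨⟨0, hn⟩, Finset.mem_univ _⟩

def mOf (hn : 1 ≤ n) (v : Euc n) : ℝ :=
  Finset.univ.sup' (uNE hn) fun i => -((n : ℝ) * v i)

lemma npos (hn : 1 ≤ n) : (0 : ℝ) < n := by exact_mod_cast hn

lemma le_mOf (hn : 1 ≤ n) (v : Euc n) (i : Fin n) : -((n : ℝ) * v i) ≤ mOf hn v := by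
  unfold mOf
  exact Finset.le_sup' (fun j : Fin n => -((n : ℝ) * v j)) (Finset.mem_univ i)

lemma mOf_zero (hn : 1 ≤ n) : mOf hn (0 : Euc n) = 0 := by
  unfold mOf
  rw [show (fun i : Fin n => -((n : ℝ) * (0 : Euc n) i)) = fun _ : Fin n => (0:ℝ) by
    funext i; simp]
  apply Finset.sup'_const

lemma mOf_nonneg (hn : 1 ≤ n) {v : Euc n} (hv : ∑ i, v i = 0) : 0 ≤ mOf hn v := by
  by_contra h
  push_neg at h
  unfold mOf at h
  rw [Finset.sup'_lt_iff] at h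
  have hpos : ∀ i ∈ Finset.univ, (0:ℝ) < v i := by
    intro i _
    have := h i (Finset.mem_univ i)
    nlinarith [npos hn]
  have : (0:ℝ) < ∑ i, v i := Finset.sum_pos hpos ⟨⟨0, hn⟩, Finset.mem_univ _⟩
  rw [hv] at this; exact lt_irrefl _ this

lemma mOf_pos (hn : 1 ≤ n) {v : Euc n} (hv : ∑ i, v i = 0) (h0 : v ≠ 0) : 0 < mOf hn v := by
  rcases lt_or_eq_of_le (mOf_nonneg hn hv) with h | h
  · exact h
  exfalso
  apply h0
  have hle : ∀ i ∈ Finset.univ, (0:ℝ) ≤ v i := by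
    intro i _
    have := le_mOf hn v i
    rw [← h] at this
    nlinarith [npos hn]
  have := (Finset.sum_eq_zero_iff_of_nonneg hle).1 hv
  ext i
  exact this i (Finset.mem_univ i)

lemma mOf_smul (hn : 1 ≤ n) {t : ℝ} (ht : 0 ≤ t) (v : Euc n) :
    mOf hn (t • v) = t * mOf hn v := by
  unfold mOf
  have h2 : (fun i : Fin n => -((n:ℝ) * (t • v) i)) = fun i : Fin n => t * (-((n:ℝ) * v i)) := by
    funext i
    have : (t • v) i = t * v i := rfl
    rw [this]; ring
  rw [h2]
  exact (Finset.comp_sup'_eq_sup'_comp (uNE hn) (fun a => t * a)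
    (fun a b => mul_max_of_nonneg a b ht)).symm

/-! ### the radial (gauge) map -/

def radial (hn : 1 ≤ n) (v : Euc n) : Euc n :=
  if v = 0 then 0 else (mOf hn v / ‖v‖) • v

lemma norm_sq_eq (w : Euc n) : ‖w‖ ^ 2 = ∑ i, w i ^ 2 := by
  rw [EuclideanSpace.norm_eq, Real.sq_sqrt (by positivity)]
  refine Finset.sum_congr rfl fun i _ => ?_
  rw [Real.norm_eq_abs, sq_abs]

lemma norm_radial (hn : 1 ≤ n) (v : Euc n) : ‖radial hn v‖ = |mOf hn v| := by
  unfold radial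
  by_cases h : v = 0
  · rw [if_pos h, h, mOf_zero hn]; simp
  · rw [if_neg h, norm_smul]
    have hv : ‖v‖ ≠ 0 := norm_ne_zero_iff.2 h
    rw [Real.norm_eq_abs, abs_div, abs_norm]
    field_simp

lemma sum_radial (hn : 1 ≤ n) {v : Euc n} (hv : ∑ i, v i = 0) :
    ∑ i, radial hn v i = 0 := by
  unfold radial
  by_cases h : v = 0
  · rw [if_pos h]; simp
  · rw [if_neg h]
    have : ∀ i : Fin n, ((mOf hn v / ‖v‖) • v) i = (mOf hn v / ‖v‖) * v i := fun _ => rfl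
    simp only [this]
    rw [← Finset.mul_sum, hv, mul_zero]

lemma radial_inj (hn : 1 ≤ n) {v v' : Euc n} (hv : ∑ i, v i = 0) (hv' : ∑ i, v' i = 0)
    (h : radial hn v = radial hn v') : v = v' := by
  by_cases h0 : v = 0
  · by_cases h0' : v' = 0
    · rw [h0, h0']
    · exfalso
      have h1 : ‖radial hn v‖ = 0 := by rw [show radial hn v = 0 by unfold radial; rw [if_pos h0]]; simp
      rw [h, norm_radial hn] at h1
      have := mOf_pos hn hv' h0'
      rw [abs_of_nonneg this.le] at h1
      exact this.ne' h1
  · by_cases h0' : v' = 0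
    · exfalso
      have h1 : ‖radial hn v'‖ = 0 := by rw [show radial hn v' = 0 by unfold radial; rw [if_pos h0']]; simp
      rw [← h, norm_radial hn] at h1
      have := mOf_pos hn hv h0
      rw [abs_of_nonneg this.le] at h1
      exact this.ne' h1
    · have hm : 0 < mOf hn v := mOf_pos hn hv h0
      have hm' : 0 < mOf hn v' := mOf_pos hn hv' h0'
      have hmm : mOf hn v = mOf hn v' := by
        have := congrArg norm h
        rw [norm_radial hn, norm_radial hn, abs_of_nonneg hm.le, abs_of_nonneg hm'.le] at this
        exact this
      have hN : ‖v‖ ≠ 0 := norm_ne_zero_iff.2 h0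
      have hN' : ‖v'‖ ≠ 0 := norm_ne_zero_iff.2 h0'
      have hNp : 0 < ‖v‖ := norm_pos_iff.2 h0
      have hNp' : 0 < ‖v'‖ := norm_pos_iff.2 h0'
      unfold radial at h; rw [if_neg h0, if_neg h0'] at h
      have hs : mOf hn ((mOf hn v / ‖v‖) • v) = mOf hn ((mOf hn v' / ‖v'‖) • v') := by rw [h]
      rw [mOf_smul hn (by positivity), mOf_smul hn (by positivity)] at hs
      rw [← hmm] at hs
      have hnorm : ‖v‖ = ‖v'‖ := by
        field_simp at hs
        nlinarith
      have h2 : (mOf hn v / ‖v‖) • v = (mOf hn v / ‖v‖) • v' := by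
        rw [h, hmm, hnorm]
      have hc : (mOf hn v / ‖v‖) ≠ 0 := by positivity
      exact smul_right_injective (Euc n) hc h2

lemma radial_scale (hn : 1 ≤ n) {b : Euc n} (hb0 : ∑ i, b i = 0) (hb : b ≠ 0) :
    radial hn ((‖b‖ / mOf hn b) • b) = b := by
  have hr : 0 < mOf hn b := mOf_pos hn hb0 hb
  have hbn : (0:ℝ) < ‖b‖ := norm_pos_iff.2 hb
  have hsc : (0:ℝ) < ‖b‖ / mOf hn b := by positivity
  have hv : (‖b‖ / mOf hn b) • b ≠ 0 := smul_ne_zero hsc.ne' hb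
  unfold radial
  rw [if_neg hv, mOf_smul hn hsc.le, norm_smul, Real.norm_eq_abs,
    abs_of_nonneg hsc.le, smul_smul]
  convert one_smul ℝ b using 2
  field_simp

/-! ### The map Phi -/

def vOf (x : Euc n) : Euc n := WithLp.toLp 2 (fun i => x i ^ 2 - 1 / n)

lemma vOf_apply (x : Euc n) (i : Fin n) : vOf x i = x i ^ 2 - 1 / n := rfl

def onesE : Euc n := WithLp.toLp 2 (fun _ => 1)

def sOf (hn : 1 ≤ n) (x : Euc n) : ℝ :=
  if 0 ≤ ∏ i, x i then Real.sqrt (1 - mOf hn (vOf x) ^ 2)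
  else -Real.sqrt (1 - mOf hn (vOf x) ^ 2)

def Phi (hn : 1 ≤ n) (x : Euc n) : Euc n :=
  radial hn (vOf x) + (sOf hn x / Real.sqrt n) • onesE

lemma Phi_apply (hn : 1 ≤ n) (x : Euc n) (i : Fin n) :
    Phi hn x i = radial hn (vOf x) i + sOf hn x / Real.sqrt n := by
  have h1 : Phi hn x i = radial hn (vOf x) i + ((sOf hn x / Real.sqrt n) • onesE) i := rfl
  have h2 : ((sOf hn x / Real.sqrt n) • onesE : Euc n) i = sOf hn x / Real.sqrt n * 1 := rfl
  rw [h1, h2, mul_one]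

/-! ### Facts for x on the sphere -/

section SphereFacts

variable (hn : 1 ≤ n) {x : Euc n} (hx : ∑ i, x i ^ 2 = 1)
include hn

lemma sum_vOf (hx : ∑ i, x i ^ 2 = 1) : ∑ i, vOf x i = 0 := by
  have hne : (n : ℝ) ≠ 0 := (npos hn).ne'
  simp only [vOf_apply]
  rw [Finset.sum_sub_distrib, hx, Finset.sum_const, Finset.card_univ, Fintype.card_fin]
  rw [nsmul_eq_mul]; field_simp; ring

lemma mOf_le_one : mOf hn (vOf x) ≤ 1 := by
  unfold mOf
  rw [Finset.sup'_le_iff]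
  intro i _
  have : (0:ℝ) ≤ (n:ℝ) * x i ^ 2 := by positivity
  rw [vOf_apply]
  have hne : (n : ℝ) ≠ 0 := (npos hn).ne'
  have : (n:ℝ) * (x i ^ 2 - 1/n) = n * x i ^ 2 - 1 := by
    rw [mul_sub, mul_one_div, div_self hne]
  rw [this]
  nlinarith

lemma mOf_ge_of_coord_zero {i : Fin n} (hi : x i = 0) : 1 ≤ mOf hn (vOf x) := by
  have := le_mOf hn (vOf x) i
  rw [vOf_apply, hi] at this
  have hne : (n : ℝ) ≠ 0 := (npos hn).ne'
  have h2 : -((n:ℝ) * (0 ^ 2 - 1/n)) = 1 := by field_simp; simp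
  rwa [h2] at this

lemma coord_ne_zero_of_mOf_lt_one (hm : mOf hn (vOf x) < 1) (i : Fin n) : x i ≠ 0 :=
  fun hi => absurd (mOf_ge_of_coord_zero hn hi) (not_le.2 hm)

lemma exists_coord_zero_of_mOf_eq_one (hm : mOf hn (vOf x) = 1) : ∃ i, x i = 0 := by
  obtain ⟨i, _, hi⟩ := Finset.exists_mem_eq_sup' (uNE hn) (fun i => -((n:ℝ) * vOf x i))
  refine ⟨i, ?_⟩
  have h1 : mOf hn (vOf x) = -((n:ℝ) * vOf x i) := hi
  rw [hm, vOf_apply] at h1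
  have hne : (n : ℝ) ≠ 0 := (npos hn).ne'
  have : (n:ℝ) * x i ^ 2 = 0 := by field_simp at h1 ⊢; nlinarith
  have : x i ^ 2 = 0 := by
    rcases mul_eq_zero.1 this with h | h
    · exact absurd h hne
    · exact h
  exact pow_eq_zero_iff (by norm_num) |>.1 this

lemma sOf_sq (hx : ∑ i, x i ^ 2 = 1) : sOf hn x ^ 2 = 1 - mOf hn (vOf x) ^ 2 := by
  have h0 : 0 ≤ mOf hn (vOf x) := mOf_nonneg hn (sum_vOf hn hx)
  have h1 : mOf hn (vOf x) ≤ 1 := mOf_le_one hn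
  have h2 : (0:ℝ) ≤ 1 - mOf hn (vOf x) ^ 2 := by nlinarith
  unfold sOf
  split_ifs
  · rw [Real.sq_sqrt h2]
  · rw [neg_sq, Real.sq_sqrt h2]

lemma Phi_sum_sq (hx : ∑ i, x i ^ 2 = 1) : ∑ i, Phi hn x i ^ 2 = 1 := by
  have hv0 : ∑ i, vOf x i = 0 := sum_vOf hn hx
  have hm0 : 0 ≤ mOf hn (vOf x) := mOf_nonneg hn hv0
  have hrs : ∑ i, radial hn (vOf x) i ^ 2 = mOf hn (vOf x) ^ 2 := by
    rw [← norm_sq_eq, norm_radial hn, sq_abs]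
  have hr0 : ∑ i, radial hn (vOf x) i = 0 := sum_radial hn hv0
  have hs2 : sOf hn x ^ 2 = 1 - mOf hn (vOf x) ^ 2 := sOf_sq hn hx
  have hnp := npos hn
  have hsn : Real.sqrt n ≠ 0 := by positivity
  have hnn : (Real.sqrt n) ^ 2 = n := Real.sq_sqrt (le_of_lt hnp)
  have hne : (n:ℝ) ≠ 0 := hnp.ne'
  calc ∑ i, Phi hn x i ^ 2
      = ∑ i, (radial hn (vOf x) i ^ 2
          + 2 * (sOf hn x / Real.sqrt n) * radial hn (vOf x) i
          + (sOf hn x / Real.sqrt n) ^ 2) := by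
        refine Finset.sum_congr rfl fun i _ => ?_
        rw [Phi_apply]; ring
    _ = ∑ i, radial hn (vOf x) i ^ 2
          + 2 * (sOf hn x / Real.sqrt n) * ∑ i, radial hn (vOf x) i
          + n * (sOf hn x / Real.sqrt n) ^ 2 := by
        rw [Finset.sum_add_distrib, Finset.sum_add_distrib, ← Finset.mul_sum,
          Finset.sum_const, Finset.card_univ, Fintype.card_fin, nsmul_eq_mul]
    _ = 1 := by
        rw [hrs, hr0, div_pow, hnn]
        field_simp
        rw [hs2]; ring

lemma Phi_mem (hx : ∑ i, x i ^ 2 = 1) : Phi hn x ∈ sphere (0 : Euc n) 1 := by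
  rw [mem_sphere_zero_iff_norm]
  have h : ‖Phi hn x‖ ^ 2 = 1 := by rw [norm_sq_eq]; exact Phi_sum_sq hn hx
  nlinarith [norm_nonneg (Phi hn x)]

end SphereFacts

lemma sum_Phi (hn : 1 ≤ n) {x : Euc n} (hx : ∑ i, x i ^ 2 = 1) :
    ∑ i, Phi hn x i = sOf hn x * Real.sqrt n := by
  have hnp := npos hn
  have hsn : Real.sqrt n ≠ 0 := by positivity
  have hnn : Real.sqrt n * Real.sqrt n = n := Real.mul_self_sqrt hnp.le
  simp only [Phi_apply]
  rw [Finset.sum_add_distrib, sum_radial hn (sum_vOf hn hx), Finset.sum_const,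
    Finset.card_univ, Fintype.card_fin, nsmul_eq_mul, zero_add]
  rw [← hnn]
  field_simp
  rw [Real.sqrt_sq (Real.sqrt_nonneg _)]
  ring

lemma Phi_congr (hn : 1 ≤ n) {x x' : Euc n} (hsq : ∀ i, x' i ^ 2 = x i ^ 2)
    (hp : ∏ i, x' i = ∏ i, x i) : Phi hn x' = Phi hn x := by
  have hv : vOf x' = vOf x := by
    ext i; rw [vOf_apply, vOf_apply, hsq i]
  unfold Phi sOf
  rw [hv, hp]

lemma Phi_inj (hn : 1 ≤ n) {x x' : Euc n} (hx : ∑ i, x i ^ 2 = 1)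
    (hx' : ∑ i, x' i ^ 2 = 1) (h : Phi hn x = Phi hn x') :
    (∀ i, x' i ^ 2 = x i ^ 2) ∧ ∏ i, x' i = ∏ i, x i := by
  have hnp := npos hn
  have hsn : Real.sqrt n ≠ 0 := by positivity
  have hsum : sOf hn x * Real.sqrt n = sOf hn x' * Real.sqrt n := by
    rw [← sum_Phi hn hx, ← sum_Phi hn hx', h]
  have hs : sOf hn x = sOf hn x' := mul_right_cancel₀ hsn hsum
  have hrad : radial hn (vOf x) = radial hn (vOf x') := by
    ext i
    have h1 : Phi hn x i = Phi hn x' i := by rw [h]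
    rw [Phi_apply, Phi_apply, hs] at h1
    exact add_right_cancel h1
  have hveq : vOf x = vOf x' := radial_inj hn (sum_vOf hn hx) (sum_vOf hn hx') hrad
  have hsq : ∀ i, x' i ^ 2 = x i ^ 2 := by
    intro i
    have h2 := congrArg (fun w : Euc n => w i) hveq
    simp only [vOf_apply] at h2
    linarith
  refine ⟨hsq, ?_⟩
  have hm : mOf hn (vOf x) ≤ 1 := mOf_le_one hn
  have hmeq : mOf hn (vOf x') = mOf hn (vOf x) := by rw [hveq]
  have hp2 : (∏ i, x' i) ^ 2 = (∏ i, x i) ^ 2 := by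
    rw [← Finset.prod_pow, ← Finset.prod_pow]
    exact Finset.prod_congr rfl fun i _ => hsq i
  rcases lt_or_eq_of_le hm with hlt | heq1
  · -- all coordinates nonzero
    have hx0 : ∀ i, x i ≠ 0 := coord_ne_zero_of_mOf_lt_one hn hlt
    have hx'0 : ∀ i, x' i ≠ 0 := by
      intro i
      apply coord_ne_zero_of_mOf_lt_one hn
      rw [hmeq]; exact hlt
    have hpx : ∏ i, x i ≠ 0 := Finset.prod_ne_zero_iff.2 fun i _ => hx0 i
    have hpx' : ∏ i, x' i ≠ 0 := Finset.prod_ne_zero_iff.2 fun i _ => hx'0 i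
    have hspos : 0 < Real.sqrt (1 - mOf hn (vOf x) ^ 2) := by
      have h0 : 0 ≤ mOf hn (vOf x) := mOf_nonneg hn (sum_vOf hn hx)
      apply Real.sqrt_pos.2; nlinarith
    rcases sq_eq_sq_iff_eq_or_eq_neg.1 hp2 with hgood | hbad
    · exact hgood
    · exfalso
      unfold sOf at hs
      rw [← hveq] at hs
      split_ifs at hs with h1 h2 h2
      · rw [hbad] at h2
        have : ∏ i, x i = 0 := le_antisymm (by linarith) h1
        exact hpx this
      · linarith
      · linarith
      · rw [hbad] at h2
        push_neg at h1 h2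
        linarith
  · -- some coordinate of x is zero, hence also of x'
    obtain ⟨i, hi⟩ := exists_coord_zero_of_mOf_eq_one hn (x := x) heq1
    have hi' : x' i = 0 := by
      have := hsq i
      rw [hi] at this
      have h0 : x' i ^ 2 = 0 := by rw [this]; ring
      exact pow_eq_zero_iff (two_ne_zero) |>.1 h0
    have e1 : (∏ j, x' j) = 0 := Finset.prod_eq_zero (Finset.mem_univ i) hi'
    have e2 : (∏ j, x j) = 0 := Finset.prod_eq_zero (Finset.mem_univ i) hi
    rw [e1, e2]

/-! ### Continuity -/

lemma continuous_vOf : Continuous (vOf : Euc n → Euc n) := by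
  refine (PiLp.continuous_toLp 2 _).comp (continuous_pi fun i => ?_)
  exact ((PiLp.continuous_apply 2 _ i).pow 2).sub continuous_const

lemma continuous_mOf (hn : 1 ≤ n) : Continuous (mOf hn : Euc n → ℝ) := by
  show Continuous fun v : Euc n => Finset.univ.sup' (uNE hn) fun i => -((n : ℝ) * v i)
  exact Continuous.finset_sup'_apply (uNE hn)
    fun i _ => (continuous_const.mul (PiLp.continuous_apply 2 _ i)).neg

lemma continuous_radial (hn : 1 ≤ n) : Continuous (radial hn : Euc n → Euc n) := by
  rw [continuous_iff_continuousAt]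
  intro v0
  by_cases h : v0 = 0
  · subst h
    have key : Filter.Tendsto (radial hn) (nhds (0 : Euc n)) (nhds (0 : Euc n)) := by
      apply squeeze_zero_norm (fun v => (norm_radial hn v).le)
      have hcont : Continuous fun v : Euc n => |mOf hn v| := (continuous_mOf hn).abs
      have h2 := hcont.tendsto 0
      rwa [mOf_zero hn, abs_zero] at h2
    unfold ContinuousAt
    rwa [show radial hn (0 : Euc n) = 0 by unfold radial; rw [if_pos rfl]]
  · have hmem : {v : Euc n | v ≠ 0} ∈ nhds v0 := by
      exact IsOpen.mem_nhds isOpen_ne h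
    have hca : ContinuousAt (fun v : Euc n => (mOf hn v / ‖v‖) • v) v0 := by
      exact (((continuous_mOf hn).continuousAt).div continuous_norm.continuousAt
        (norm_ne_zero_iff.2 h)).smul continuousAt_id
    apply hca.congr
    filter_upwards [hmem] with v hv
    unfold radial; rw [if_neg hv]

lemma continuous_sOf (hn : 1 ≤ n) : Continuous (sOf hn : Euc n → ℝ) := by
  have hf : Continuous fun x : Euc n => Real.sqrt (1 - mOf hn (vOf x) ^ 2) :=
    Real.continuous_sqrt.comp
      (continuous_const.sub (((continuous_mOf hn).comp continuous_vOf).pow 2))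
  have hp : Continuous fun x : Euc n => ∏ i, x i :=
    continuous_finset_prod _ fun i _ => PiLp.continuous_apply 2 _ i
  unfold sOf
  apply Continuous.if_le hf hf.neg continuous_const hp
  intro x hx0
  obtain ⟨i, _, hi⟩ := Finset.prod_eq_zero_iff.1 hx0.symm
  have h1 : 1 ≤ mOf hn (vOf x) := mOf_ge_of_coord_zero hn hi
  have h2 : Real.sqrt (1 - mOf hn (vOf x) ^ 2) = 0 := by
    apply Real.sqrt_eq_zero'.2
    nlinarith
  simp [h2]

lemma continuous_Phi (hn : 1 ≤ n) : Continuous (Phi hn : Euc n → Euc n) := by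
  unfold Phi
  exact ((continuous_radial hn).comp continuous_vOf).add
    (((continuous_sOf hn).div_const _).smul continuous_const)

/-! ### Surjectivity -/

set_option maxHeartbeats 2000000 in
lemma Phi_surj (hn : 1 ≤ n) {w : Euc n} (hw : ∑ i, w i ^ 2 = 1) :
    ∃ x : Euc n, (∑ i, x i ^ 2 = 1) ∧ Phi hn x = w := by
  classical
  have hnp := npos hn
  have hne : (n:ℝ) ≠ 0 := hnp.ne'
  have hsn : (0:ℝ) < Real.sqrt n := Real.sqrt_pos.2 hnp
  have hnn : Real.sqrt n * Real.sqrt n = n := Real.mul_self_sqrt hnp.le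
  set i0 : Fin n := ⟨0, hn⟩ with hi0
  set S : ℝ := ∑ i, w i with hS
  set t : ℝ := S / Real.sqrt n with ht
  set b : Euc n := (WithLp.toLp 2 (fun i => w i - S / n) : Euc n) with hb
  have hb_apply : ∀ i, b i = w i - S / n := fun i => rfl
  have hsum_b : ∑ i, b i = 0 := by
    simp only [hb_apply]
    rw [Finset.sum_sub_distrib, Finset.sum_const, Finset.card_univ, Fintype.card_fin,
      nsmul_eq_mul, ← hS]
    field_simp; ring
  have htsn : t / Real.sqrt n = S / n := by
    rw [ht, div_div, hnn]
  have hw_eq : ∀ i, w i = b i + t / Real.sqrt n := by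
    intro i
    rw [hb_apply, htsn]; ring
  have ht2 : t ^ 2 = S ^ 2 / n := by
    rw [ht, div_pow, Real.sq_sqrt hnp.le]
  have hnormb : ‖b‖ ^ 2 = 1 - t ^ 2 := by
    rw [norm_sq_eq]
    have expand : ∀ i ∈ Finset.univ, b i ^ 2 = w i ^ 2 - 2 * (S/n) * w i + (S/n)^2 := by
      intro i _; rw [hb_apply]; ring
    rw [Finset.sum_congr rfl expand]
    rw [Finset.sum_add_distrib, Finset.sum_sub_distrib, ← Finset.mul_sum, ← hS, hw,
      Finset.sum_const, Finset.card_univ, Fintype.card_fin, nsmul_eq_mul, ht2]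
    field_simp
    ring
  by_cases hb0 : b = 0
  · -- w is the constant vector ±1/√n
    have hwconst : ∀ i, w i = t / Real.sqrt n := by
      intro i
      have : b i = 0 := by rw [hb0]; rfl
      rw [hw_eq i, this, zero_add]
    have ht1 : t ^ 2 = 1 := by
      have h0 : ‖b‖ = 0 := by rw [hb0, norm_zero]
      have := hnormb
      rw [h0] at this
      nlinarith
    -- the candidate x
    set x : Euc n := (WithLp.toLp 2 (fun i => if t < 0 ∧ i = i0 then -(1 / Real.sqrt n) else 1 / Real.sqrt n) : Euc n)
      with hxdef
    have hx_apply : ∀ i, x i = if t < 0 ∧ i = i0 then -(1 / Real.sqrt n) else 1 / Real.sqrt n :=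
      fun i => rfl
    have hx_sq : ∀ i, x i ^ 2 = 1 / n := by
      intro i
      have hsq1 : (1 / Real.sqrt n) ^ 2 = 1 / (n:ℝ) := by
        rw [div_pow, one_pow, Real.sq_sqrt hnp.le]
      rw [hx_apply i]
      split_ifs
      · rw [neg_sq, hsq1]
      · rw [hsq1]
    have hx_sum : ∑ i, x i ^ 2 = 1 := by
      rw [Finset.sum_congr rfl fun i _ => hx_sq i, Finset.sum_const, Finset.card_univ,
        Fintype.card_fin, nsmul_eq_mul]
      field_simp
    have hvx : vOf x = (0 : Euc n) := by
      ext i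
      rw [vOf_apply, hx_sq i]
      simp
    have hmx : mOf hn (vOf x) = 0 := by rw [hvx, mOf_zero hn]
    have hradx : radial hn (vOf x) = 0 := by
      rw [hvx]; unfold radial; rw [if_pos rfl]
    have hsx : sOf hn x = t := by
      have hcase : t = 1 ∨ t = -1 := by
        have h2 : t ^ 2 = 1 ^ 2 := by rw [ht1, one_pow]
        exact sq_eq_sq_iff_eq_or_eq_neg.1 h2
      unfold sOf
      rw [hmx, show (1:ℝ) - 0 ^ 2 = 1 by norm_num, Real.sqrt_one]
      by_cases htneg : t < 0
      · have ht_1 : t = -1 := by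
          rcases hcase with h | h
          · exact absurd h (by intro hh; rw [hh] at htneg; linarith)
          · exact h
        have hprod : ∏ i, x i = -(1 / Real.sqrt n) ^ n := by
          have heq : ∀ i ∈ Finset.univ, x i
              = (if i = i0 then (-1 : ℝ) else 1) * (1 / Real.sqrt n) := by
            intro i _
            rw [hx_apply i]
            split_ifs with h1 h2 h2
            · ring
            · exact absurd h1.2 h2
            · exact absurd ⟨htneg, h2⟩ h1
            · ring
          rw [Finset.prod_congr rfl heq, Finset.prod_mul_distrib, Finset.prod_const,
            Finset.prod_ite_eq' Finset.univ i0 (fun _ => (-1 : ℝ))]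
          simp [Finset.card_univ]
        have hneg : ¬ (0 ≤ ∏ i, x i) := by
          rw [hprod]
          push_neg
          have hlt : (0:ℝ) < (1 / Real.sqrt n) ^ n := by positivity
          linarith
        rw [if_neg hneg, ht_1]
      · have hprod : (0:ℝ) ≤ ∏ i, x i := by
          apply Finset.prod_nonneg
          intro i _
          rw [hx_apply i]
          split_ifs with h1
          · exact absurd h1.1 htneg
          · positivity
        rw [if_pos hprod]
        rcases hcase with h | h
        · exact h.symm
        · exfalso
          rw [h] at htneg
          exact htneg (by norm_num)
    refine ⟨x, hx_sum, ?_⟩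
    ext i
    rw [Phi_apply, hsx, hwconst i, hradx]
    have : (0 : Euc n) i = 0 := rfl
    rw [this, zero_add]
  · -- b ≠ 0
    have hr : 0 < mOf hn b := mOf_pos hn hsum_b hb0
    set r : ℝ := mOf hn b with hrdef
    have hbn : (0:ℝ) < ‖b‖ := norm_pos_iff.2 hb0
    have hble : ‖b‖ ≤ 1 := by nlinarith [sq_nonneg t]
    set y : Fin n → ℝ := fun i => 1/n + (‖b‖/r) * b i with hydef
    have hy0 : ∀ i, 0 ≤ y i := by
      intro i
      have h1 : -((n:ℝ) * b i) ≤ r := le_mOf hn b i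
      have h2 : -b i ≤ r / n := by
        rw [le_div_iff₀ hnp]; nlinarith
      have h3 : ‖b‖/r * (-b i) ≤ ‖b‖/r * (r/n) := by
        apply mul_le_mul_of_nonneg_left h2 (by positivity)
      have h4 : ‖b‖/r * (r/n) = ‖b‖/n := by field_simp
      have h5 : ‖b‖/n ≤ 1/n := by gcongr
      have : -(‖b‖/r * b i) ≤ 1/n := by
        calc -(‖b‖/r * b i) = ‖b‖/r * (-b i) := by ring
          _ ≤ ‖b‖/r * (r/n) := h3
          _ = ‖b‖/n := h4
          _ ≤ 1/n := h5
      simp only [hydef]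
      linarith
    set x : Euc n :=
      (WithLp.toLp 2 (fun i => (if t < 0 ∧ i = i0 then (-1:ℝ) else 1) * Real.sqrt (y i)) : Euc n) with hxdef
    have hx_apply : ∀ i, x i = (if t < 0 ∧ i = i0 then (-1:ℝ) else 1) * Real.sqrt (y i) :=
      fun i => rfl
    have hx_sq : ∀ i, x i ^ 2 = y i := by
      intro i
      rw [hx_apply i, mul_pow, Real.sq_sqrt (hy0 i)]
      split_ifs <;> ring
    have hx_sum : ∑ i, x i ^ 2 = 1 := by
      rw [Finset.sum_congr rfl fun i _ => hx_sq i]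
      simp only [hydef]
      rw [Finset.sum_add_distrib, ← Finset.mul_sum, hsum_b, mul_zero, add_zero,
        Finset.sum_const, Finset.card_univ, Fintype.card_fin, nsmul_eq_mul]
      field_simp
    have hvx : vOf x = (‖b‖/r) • b := by
      ext i
      rw [vOf_apply, hx_sq i]
      have h1 : ((‖b‖/r) • b) i = (‖b‖/r) * b i := rfl
      rw [h1]
      simp only [hydef]
      ring
    have hradx : radial hn (vOf x) = b := by
      rw [hvx]
      exact radial_scale hn hsum_b hb0
    have hmx : mOf hn (vOf x) = ‖b‖ := by
      rw [hvx, mOf_smul hn (by positivity), ← hrdef]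
      field_simp
    have hsqrt1 : Real.sqrt (1 - mOf hn (vOf x) ^ 2) = |t| := by
      rw [hmx, show (1:ℝ) - ‖b‖ ^ 2 = t ^ 2 by linarith [hnormb], Real.sqrt_sq_eq_abs]
    have hsx : sOf hn x = t := by
      unfold sOf
      by_cases htneg : t < 0
      · have hblt : ‖b‖ < 1 := by nlinarith [hnormb, sq_nonneg t, mul_self_nonneg t]
        have hy_pos : ∀ i, 0 < y i := by
          intro i
          have h1 := le_mOf hn (vOf x) i
          rw [hmx, vOf_apply, hx_sq i] at h1
          -- h1 : -(n * (y i - 1/n)) ≤ ‖b‖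
          have : 1 - (n:ℝ) * y i ≤ ‖b‖ := by
            have hexp : -((n:ℝ) * (y i - 1/n)) = 1 - n * y i := by
              field_simp
              ring
            linarith [hexp ▸ h1]
          nlinarith
        have hprod : ∏ i, x i = - ∏ i, Real.sqrt (y i) := by
          have heq : ∀ i ∈ Finset.univ, x i
              = (if i = i0 then (-1:ℝ) else 1) * Real.sqrt (y i) := by
            intro i _
            rw [hx_apply i]
            congr 1
            split_ifs with h1 h2 h2
            · rfl
            · exact absurd h1.2 h2
            · exact absurd ⟨htneg, h2⟩ h1
            · rfl
          rw [Finset.prod_congr rfl heq, Finset.prod_mul_distrib,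
            Finset.prod_ite_eq' Finset.univ i0 (fun _ => (-1 : ℝ))]
          simp
        have hppos : 0 < ∏ i, Real.sqrt (y i) :=
          Finset.prod_pos fun i _ => Real.sqrt_pos.2 (hy_pos i)
        have hneg : ¬ (0 ≤ ∏ i, x i) := by
          rw [hprod]; push_neg; linarith
        rw [if_neg hneg, hsqrt1, abs_of_neg htneg]
        ring
      · push_neg at htneg
        have hprod : (0:ℝ) ≤ ∏ i, x i := by
          apply Finset.prod_nonneg
          intro i _
          rw [hx_apply i]
          have : ¬ (t < 0 ∧ i = i0) := fun h => absurd h.1 (not_lt.2 htneg)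
          rw [if_neg this, one_mul]
          exact Real.sqrt_nonneg _
        rw [if_pos hprod, hsqrt1, abs_of_nonneg htneg]
    refine ⟨x, hx_sum, ?_⟩
    ext i
    rw [Phi_apply, hsx, hw_eq i]
    congr 1
    rw [hradx]

/-! ### Orbit characterization -/

lemma prod_pm {ε : Fin n → ℝ} (hpm : ∀ i, ε i = 1 ∨ ε i = -1) (s : Finset (Fin n)) :
    (∏ i ∈ s, ε i) = 1 ∨ (∏ i ∈ s, ε i) = -1 := by
  classical
  induction s using Finset.induction with
  | empty => left; simp
  | @insert a s ha ih =>
    rw [Finset.prod_insert ha]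
    rcases hpm a with h | h <;> rcases ih with h2 | h2 <;> simp [h, h2]

lemma exists_signIso (hn : 1 ≤ n) (D : Subgroup (Orth n))
    (hD : ∀ g : Orth n, g ∈ D ↔ ∃ ε : Fin n → ℝ,
      (∀ i, ε i = 1 ∨ ε i = -1) ∧ (∏ i, ε i) = 1 ∧ ∀ (x : Euc n) (i : Fin n), g x i = ε i * x i)
    {x x' : Euc n} (hsq : ∀ i, x' i ^ 2 = x i ^ 2) (hprod : ∏ i, x' i = ∏ i, x i) :
    ∃ g : Orth n, g ∈ D ∧ g x = x' := by
  classical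
  have hpm : ∀ i, x i ≠ 0 → x' i / x i = 1 ∨ x' i / x i = -1 := by
    intro i hi
    rcases sq_eq_sq_iff_eq_or_eq_neg.1 (hsq i) with h | h
    · left; rw [h]; field_simp
    · right; rw [h]; field_simp
  have hzero : ∀ i, x i = 0 → x' i = 0 := by
    intro i hi
    have h2 := hsq i
    rw [hi] at h2
    have h0 : x' i ^ 2 = 0 := by rw [h2]; ring
    exact pow_eq_zero_iff two_ne_zero |>.1 h0
  by_cases hz : ∃ j, x j = 0
  · obtain ⟨j, hj⟩ := hz
    set ε0 : Fin n → ℝ := fun i => if x i = 0 then 1 else x' i / x i with hε0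
    have hε0pm : ∀ i, ε0 i = 1 ∨ ε0 i = -1 := by
      intro i
      by_cases h : x i = 0
      · left; simp [hε0, h]
      · have h2 := hpm i h
        simpa [hε0, h] using h2
    set P : ℝ := ∏ i, ε0 i with hP
    have hPpm : P = 1 ∨ P = -1 := prod_pm hε0pm _
    set ε : Fin n → ℝ := fun i => (if i = j then P else 1) * ε0 i with hε
    have hεpm : ∀ i, ε i = 1 ∨ ε i = -1 := by
      intro i
      simp only [hε]
      split_ifs with h
      · rcases hPpm with hp | hp <;> rcases hε0pm i with h0 | h0 <;>
          rw [hp, h0] <;> norm_num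
      · rcases hε0pm i with h0 | h0 <;> rw [h0] <;> norm_num
    have hεprod : ∏ i, ε i = 1 := by
      simp only [hε]
      rw [Finset.prod_mul_distrib, Finset.prod_ite_eq' Finset.univ j (fun _ => P), ← hP]
      rcases hPpm with hp | hp <;> rw [hp] <;> simp
    refine ⟨signIso ε, (hD _).2 ⟨ε, hεpm, hεprod, fun z i => signIso_apply ε hεpm z i⟩, ?_⟩
    ext i
    rw [signIso_apply ε hεpm x i]
    by_cases h : x i = 0
    · rw [h, mul_zero, (hzero i h).symm]
    · have hij : i ≠ j := fun hh => h (hh ▸ hj)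
      have : ε i = x' i / x i := by
        simp only [hε, hε0]
        rw [if_neg hij, if_neg h, one_mul]
      rw [this, div_mul_cancel₀ _ h]
  · push_neg at hz
    set ε : Fin n → ℝ := fun i => x' i / x i with hε
    have hεpm : ∀ i, ε i = 1 ∨ ε i = -1 := fun i => hpm i (hz i)
    have hεprod : ∏ i, ε i = 1 := by
      simp only [hε]
      rw [Finset.prod_div_distrib, hprod]
      exact div_self (Finset.prod_ne_zero_iff.2 fun i _ => hz i)
    refine ⟨signIso ε, (hD _).2 ⟨ε, hεpm, hεprod, fun z i => signIso_apply ε hεpm z i⟩, ?_⟩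
    ext i
    rw [signIso_apply ε hεpm x i]
    simp only [hε]
    rw [div_mul_cancel₀ _ (hz i)]

lemma smul_invariants (D : Subgroup (Orth n))
    (hD : ∀ g : Orth n, g ∈ D ↔ ∃ ε : Fin n → ℝ,
      (∀ i, ε i = 1 ∨ ε i = -1) ∧ (∏ i, ε i) = 1 ∧ ∀ (x : Euc n) (i : Fin n), g x i = ε i * x i)
    {g : Orth n} (hg : g ∈ D) (x : Euc n) :
    (∀ i, g x i ^ 2 = x i ^ 2) ∧ (∏ i, g x i) = ∏ i, x i := by
  obtain ⟨ε, hpm, hp1, happ⟩ := (hD g).1 hg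
  constructor
  · intro i
    rw [happ x i]
    rcases hpm i with h | h <;> rw [h] <;> ring
  · calc (∏ i, g x i) = ∏ i, ε i * x i := Finset.prod_congr rfl fun i _ => happ x i
      _ = (∏ i, ε i) * ∏ i, x i := Finset.prod_mul_distrib
      _ = ∏ i, x i := by rw [hp1, one_mul]

end Stmt17

/-- Let `D⁺(n) ≤ SO(n)` be the group of all even sign changes of coordinates, i.e.
of diagonal orthogonal transformations `diag(ε₁, …, ε_n)` with `εᵢ = ±1` and
`ε₁ ⋯ ε_n = 1`. Then `S^{n-1}/D⁺(n)` with the quotient topology is homeomorphic to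
`S^{n-1}`. -/
theorem stmt_17 (n : ℕ) (hn : 1 ≤ n) (D : Subgroup (Orth n))
    (hD : ∀ g : Orth n, g ∈ D ↔ ∃ ε : Fin n → ℝ,
      (∀ i, ε i = 1 ∨ ε i = -1) ∧ (∏ i, ε i) = 1 ∧ ∀ (x : Euc n) (i : Fin n), g x i = ε i * x i) :
    Nonempty (Quotient (MulAction.orbitRel D (sphere (0 : Euc n) 1)) ≃ₜ
      sphere (0 : Euc n) 1) := by
  classical
  have hsph : ∀ z : sphere (0 : Euc n) 1, ∑ i, (z : Euc n) i ^ 2 = 1 := by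
    intro z
    have hz := z.2
    rw [mem_sphere_zero_iff_norm] at hz
    have h2 := Stmt17.norm_sq_eq (z : Euc n)
    rw [hz, one_pow] at h2
    exact h2.symm
  let f : sphere (0 : Euc n) 1 → sphere (0 : Euc n) 1 :=
    fun z => ⟨Stmt17.Phi hn z.1, Stmt17.Phi_mem hn (hsph z)⟩
  have hsound : ∀ a b : sphere (0 : Euc n) 1,
      MulAction.orbitRel D (sphere (0 : Euc n) 1) a b → f a = f b := by
    intro a b hab
    rw [MulAction.orbitRel_apply] at hab
    obtain ⟨g, hg⟩ := hab
    have h1 : (g : Orth n) (b : Euc n) = (a : Euc n) := congrArg Subtype.val hg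
    obtain ⟨hsq, hprod⟩ := Stmt17.smul_invariants D hD g.2 (b : Euc n)
    rw [h1] at hsq hprod
    exact Subtype.ext (Stmt17.Phi_congr hn hsq hprod)
  let q : Quotient (MulAction.orbitRel D (sphere (0 : Euc n) 1)) → sphere (0 : Euc n) 1 :=
    Quotient.lift f hsound
  have hinj : Function.Injective q := by
    intro u v
    refine Quotient.inductionOn₂ u v ?_
    intro a b h
    have hPhi : Stmt17.Phi hn (a : Euc n) = Stmt17.Phi hn (b : Euc n) :=
      congrArg Subtype.val h
    obtain ⟨hsq, hprod⟩ := Stmt17.Phi_inj hn (hsph a) (hsph b) hPhi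
    obtain ⟨g, hgD, hgx⟩ := Stmt17.exists_signIso hn D hD hsq hprod
    have hrel : MulAction.orbitRel D (sphere (0 : Euc n) 1) b a := by
      rw [MulAction.orbitRel_apply]
      exact ⟨⟨g, hgD⟩, Subtype.ext hgx⟩
    exact (Quotient.sound hrel).symm
  have hsurj : Function.Surjective q := by
    intro z
    obtain ⟨x, hx1, hx2⟩ := Stmt17.Phi_surj hn (hsph z)
    have hxmem : x ∈ sphere (0 : Euc n) 1 := by
      rw [mem_sphere_zero_iff_norm]
      have h := Stmt17.norm_sq_eq x
      rw [hx1] at h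
      nlinarith [norm_nonneg x]
    exact ⟨Quotient.mk _ (⟨x, hxmem⟩ : sphere (0 : Euc n) 1), Subtype.ext hx2⟩
  have hcontf : Continuous f :=
    ((Stmt17.continuous_Phi hn).comp continuous_subtype_val).subtype_mk _
  have hcontq : Continuous q := hcontf.quotient_lift hsound
  let e : Quotient (MulAction.orbitRel D (sphere (0 : Euc n) 1)) ≃ sphere (0 : Euc n) 1 :=
    Equiv.ofBijective q ⟨hinj, hsurj⟩
  exact ⟨Continuous.homeoOfEquivCompactToT2 (f := e) hcontq⟩
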